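/- Let 0 < t1 < 1/4 and 0 < t0 ≤ t_{0,crit}(t1). Then the quintic p̃ has no complex root of multiplicity three or higher: there is no x ∈ ℂ with p̃(x) = p̃'(x) = p̃''(x) = 0. -/

import Mathlib

noncomputable section

/-- The quintic `p̃` of the paper, as a complex function of `x` (with real
parameters `t0`, `t1`). -/
def ptildeC (t0 t1 : ℝ) (x : ℂ) : ℂ :=
  128*x^5 - 124*x^4 + (64*(t0:ℂ) - 16*(t1:ℂ) + 36)*x^3
    + (16*(t1:ℂ)^2 + 8*(t1:ℂ) - 28*(t0:ℂ) - 3)*x^2 + (t0:ℂ)*(2 - 8*(t1:ℂ))*x + (t0:ℂ)^2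

/-- The cubic polynomial `p1` whose greatest real root is `t_{0,crit}(t1)`. -/
def p1 (t1 s : ℝ) : ℝ :=
  8192*s^3 + 192*(64*t1 - 7)*s^2 - 48*(1 - 4*t1)^2*s + (108*t1 - 11)*(4*t1 - 1)^3

set_option maxHeartbeats 2000000 in
/-- For `0 < t1 < 1/4` and `0 < t0 ≤ t_{0,crit}(t1)`, the quintic `p̃` has no complex
root of multiplicity three or higher. -/
theorem ptilde_no_triple_root (t0 t1 tc : ℝ) (ht1 : 0 < t1) (ht1' : t1 < 1/4)
    (htc : IsGreatest {s : ℝ | p1 t1 s = 0} tc)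
    (ht0 : 0 < t0) (ht0' : t0 ≤ tc) :
    ¬ ∃ x : ℂ, ptildeC t0 t1 x = 0 ∧ deriv (ptildeC t0 t1) x = 0 ∧
      deriv (deriv (ptildeC t0 t1)) x = 0 := by
  rintro ⟨x, hp, hdp, hddp⟩
  -- first derivative
  have key1 : ∀ y : ℂ, HasDerivAt (ptildeC t0 t1)
      (640*y^4 - 496*y^3 + 3*(64*(t0:ℂ) - 16*(t1:ℂ) + 36)*y^2
        + 2*(16*(t1:ℂ)^2 + 8*(t1:ℂ) - 28*(t0:ℂ) - 3)*y + (t0:ℂ)*(2 - 8*(t1:ℂ))) y := by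
    intro y
    have h := ((((((hasDerivAt_pow 5 y).const_mul (128:ℂ)).sub
        ((hasDerivAt_pow 4 y).const_mul (124:ℂ))).add
        ((hasDerivAt_pow 3 y).const_mul (64*(t0:ℂ) - 16*(t1:ℂ) + 36))).add
        ((hasDerivAt_pow 2 y).const_mul (16*(t1:ℂ)^2 + 8*(t1:ℂ) - 28*(t0:ℂ) - 3))).add
        ((hasDerivAt_id y).const_mul ((t0:ℂ)*(2 - 8*(t1:ℂ))))).add_const ((t0:ℂ)^2)
    unfold ptildeC
    refine h.congr_deriv ?_
    push_cast
    ring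
  have hD1 : deriv (ptildeC t0 t1) = fun y : ℂ =>
      640*y^4 - 496*y^3 + 3*(64*(t0:ℂ) - 16*(t1:ℂ) + 36)*y^2
        + 2*(16*(t1:ℂ)^2 + 8*(t1:ℂ) - 28*(t0:ℂ) - 3)*y + (t0:ℂ)*(2 - 8*(t1:ℂ)) :=
    funext fun y => (key1 y).deriv
  -- second derivative
  have key2 : ∀ y : ℂ, HasDerivAt (fun y : ℂ =>
      640*y^4 - 496*y^3 + 3*(64*(t0:ℂ) - 16*(t1:ℂ) + 36)*y^2
        + 2*(16*(t1:ℂ)^2 + 8*(t1:ℂ) - 28*(t0:ℂ) - 3)*y + (t0:ℂ)*(2 - 8*(t1:ℂ)))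
      (2560*y^3 - 1488*y^2 + 6*(64*(t0:ℂ) - 16*(t1:ℂ) + 36)*y
        + 2*(16*(t1:ℂ)^2 + 8*(t1:ℂ) - 28*(t0:ℂ) - 3)) y := by
    intro y
    have h := (((((hasDerivAt_pow 4 y).const_mul (640:ℂ)).sub
        ((hasDerivAt_pow 3 y).const_mul (496:ℂ))).add
        ((hasDerivAt_pow 2 y).const_mul (3*(64*(t0:ℂ) - 16*(t1:ℂ) + 36)))).add
        ((hasDerivAt_id y).const_mul (2*(16*(t1:ℂ)^2 + 8*(t1:ℂ) - 28*(t0:ℂ) - 3)))).add_const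
        ((t0:ℂ)*(2 - 8*(t1:ℂ)))
    refine h.congr_deriv ?_
    push_cast
    ring
  have hdp' : 640*x^4 - 496*x^3 + 3*(64*(t0:ℂ) - 16*(t1:ℂ) + 36)*x^2
      + 2*(16*(t1:ℂ)^2 + 8*(t1:ℂ) - 28*(t0:ℂ) - 3)*x + (t0:ℂ)*(2 - 8*(t1:ℂ)) = 0 := by
    rw [hD1] at hdp; exact hdp
  have hddp' : 2560*x^3 - 1488*x^2 + 6*(64*(t0:ℂ) - 16*(t1:ℂ) + 36)*x
      + 2*(16*(t1:ℂ)^2 + 8*(t1:ℂ) - 28*(t0:ℂ) - 3) = 0 := by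
    rw [hD1] at hddp
    rw [funext fun y => (key2 y).deriv] at hddp
    exact hddp
  unfold ptildeC at hp
  -- Certificate 1: eliminate x and t1, get univariate condition on t0
  have hg1 : ((t0^2*(t0+10)^2*(8*t0+7)^3*(8*t0-1)^3 : ℝ) : ℂ) = 0 := by
    push_cast
    linear_combination ((20971520/3)*x^3*(t0:ℂ)^6*(t1:ℂ) + (-225771520/3)*x^3*(t0:ℂ)^6 + (-657612800/3)*x^3*(t0:ℂ)^5*(t1:ℂ) + (1581326464/3)*x^3*(t0:ℂ)^5 + (2727469376/3)*x^3*(t0:ℂ)^4*(t1:ℂ) + (-657843081/2)*x^3*(t0:ℂ)^4 + (-784528034969/120)*x^3*(t0:ℂ)^3*(t1:ℂ) + (-148365159447169/38400)*x^3*(t0:ℂ)^3 + (140125916898427/38400)*x^3*(t0:ℂ)^2*(t1:ℂ) + (20095554441352889/16384000)*x^3*(t0:ℂ)^2 + (284534103312954703/196608000)*x^3*(t0:ℂ)*(t1:ℂ) + (-17349404422560107239/62914560000)*x^3*(t0:ℂ) + (11105381840992333077/41943040000)*x^3*(t1:ℂ) + (-4497927597115100673719/80530636800000)*x^3 + (-2621440/3)*x^2*(t0:ℂ)^7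 + (-73269248/3)*x^2*(t0:ℂ)^6*(t1:ℂ) + (194759680)*x^2*(t0:ℂ)^6 + (353834240/3)*x^2*(t0:ℂ)^5*(t1:ℂ) + (-5124713444/15)*x^2*(t0:ℂ)^5 + (-7726071934/5)*x^2*(t0:ℂ)^4*(t1:ℂ) + (6019701521303/4800)*x^2*(t0:ℂ)^4 + (114603428008241/19200)*x^2*(t0:ℂ)^3*(t1:ℂ) + (15613964510152969/6144000)*x^2*(t0:ℂ)^3 + (-4116616949480001/2048000)*x^2*(t0:ℂ)^2*(t1:ℂ) + (-7411457677835148331/7864320000)*x^2*(t0:ℂ)^2 + (-24592948550372968567/31457280000)*x^2*(t0:ℂ)*(t1:ℂ) + (587594001740490904357/3355443200000)*x^2*(t0:ℂ) + (-2993550215416952931559/20132659200000)*x^2*(t1:ℂ) + (94293587513075235434647/2576980377600000)*x^2 + (2097152)*x*(t0:ℂ)^7*(t1:ℂ) + (-88367104/3)*x*(t0:ℂ)^7 + (-524288)*x*(t0:ℂ)^6*(t1:ℂ)^2 + (-101715968/3)*x*(t0:ℂ)^6*(t1:ℂ) + (131318176/5)*x*(t0:ℂ)^6 + (13299200)*x*(t0:ℂ)^5*(t1:ℂ)^2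 + (621938840/3)*x*(t0:ℂ)^5*(t1:ℂ) + (-119427120879/200)*x*(t0:ℂ)^5 + (-184045588/3)*x*(t0:ℂ)^4*(t1:ℂ)^2 + (-235934374963/240)*x*(t0:ℂ)^4*(t1:ℂ) + (-181968878519237/256000)*x*(t0:ℂ)^4 + (283813000243/640)*x*(t0:ℂ)^3*(t1:ℂ)^2 + (-391400193648257/614400)*x*(t0:ℂ)^3*(t1:ℂ) + (-89342296640227957/327680000)*x*(t0:ℂ)^3 + (-141497878652027/614400)*x*(t0:ℂ)^2*(t1:ℂ)^2 + (91713894057758131/196608000)*x*(t0:ℂ)^2*(t1:ℂ) + (55004824165112409877/419430400000)*x*(t0:ℂ)^2 + (-94105489539944901/1048576000)*x*(t0:ℂ)*(t1:ℂ)^2 + (152259733345900750759/1006632960000)*x*(t0:ℂ)*(t1:ℂ) + (-13182190958095002637193/322122547200000)*x*(t0:ℂ) + (-33399587006752999231/2013265920000)*x*(t1:ℂ)^2 + (1976756300251924200007/85899345920000)*x*(t1:ℂ) + (-10218107389019566747483/1717986918400000)*x + (262144)*(t0:ℂ)^8 + (-6750208/3)*(t0:ℂ)^7*(t1:ℂ)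 + (28765696/3)*(t0:ℂ)^7 + (1048576/3)*(t0:ℂ)^6*(t1:ℂ)^3 + (-3692544)*(t0:ℂ)^6*(t1:ℂ)^2 + (-58087040/3)*(t0:ℂ)^6*(t1:ℂ) + (345834938/15)*(t0:ℂ)^6 + (-4610560/3)*(t0:ℂ)^5*(t1:ℂ)^3 + (-50895432/5)*(t0:ℂ)^5*(t1:ℂ)^2 + (-7422032101/45)*(t0:ℂ)^5*(t1:ℂ) + (1139742987113/9600)*(t0:ℂ)^5 + (374148116/15)*(t0:ℂ)^4*(t1:ℂ)^3 + (-1034020335917/7200)*(t0:ℂ)^4*(t1:ℂ)^2 + (49429288846301/115200)*(t0:ℂ)^4*(t1:ℂ) + (2159995752383579/12288000)*(t0:ℂ)^4 + (-1788192521369/9600)*(t0:ℂ)^3*(t1:ℂ)^3 + (-480038051336557/3072000)*(t0:ℂ)^3*(t1:ℂ)^2 + (-3034051225654973/36864000)*(t0:ℂ)^3*(t1:ℂ) + (-472056066491304541/15728640000)*(t0:ℂ)^3 + (160705343202427/3072000)*(t0:ℂ)^2*(t1:ℂ)^3 + (471591206232144049/11796480000)*(t0:ℂ)^2*(t1:ℂ)^2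 + (-3374970907648336507/188743680000)*(t0:ℂ)^2*(t1:ℂ) + (68242121620084761221/20132659200000)*(t0:ℂ)^2 + (251269582916154703/15728640000)*(t0:ℂ)*(t1:ℂ)^3 + (5939010375705717517/5033164800000)*(t0:ℂ)*(t1:ℂ)^2 + (-1175320946709504181879/120795955200000)*(t0:ℂ)*(t1:ℂ) + (214426700471637339103/68719476736000)*(t0:ℂ) + (11522589259872333077/3355443200000)*(t1:ℂ)^3 + (2584068710099312286263/3865470566400000)*(t1:ℂ)^2 + (-9295872544707039455353/7730941132800000)*(t1:ℂ) + (3522600141877071566089/20615843020800000))*hp + ((-4194304/3)*x^4*(t0:ℂ)^6*(t1:ℂ) + (45154304/3)*x^4*(t0:ℂ)^6 + (131522560/3)*x^4*(t0:ℂ)^5*(t1:ℂ) + (-1581326464/15)*x^4*(t0:ℂ)^5 + (-2727469376/15)*x^4*(t0:ℂ)^4*(t1:ℂ) + (657843081/10)*x^4*(t0:ℂ)^4 + (784528034969/600)*x^4*(t0:ℂ)^3*(t1:ℂ) + (148365159447169/192000)*x^4*(t0:ℂ)^3 + (-140125916898427/192000)*x^4*(t0:ℂ)^2*(t1:ℂ)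 + (-20095554441352889/81920000)*x^4*(t0:ℂ)^2 + (-284534103312954703/983040000)*x^4*(t0:ℂ)*(t1:ℂ) + (17349404422560107239/314572800000)*x^4*(t0:ℂ) + (-11105381840992333077/209715200000)*x^4*(t1:ℂ) + (4497927597115100673719/402653184000000)*x^4 + (524288/3)*x^3*(t0:ℂ)^7 + (15466496/3)*x^3*(t0:ℂ)^6*(t1:ℂ) + (-628022272/15)*x^3*(t0:ℂ)^6 + (-96249344/3)*x^3*(t0:ℂ)^5*(t1:ℂ) + (6656623456/75)*x^3*(t0:ℂ)^5 + (5164090352/15)*x^3*(t0:ℂ)^4*(t1:ℂ) + (-395349909623/1500)*x^3*(t0:ℂ)^4 + (-3473094927307/2400)*x^3*(t0:ℂ)^3*(t1:ℂ) + (-2526660556626901/3840000)*x^3*(t0:ℂ)^3 + (417343856807281/768000)*x^3*(t0:ℂ)^2*(t1:ℂ) + (290010757527530219/1228800000)*x^3*(t0:ℂ)^2 + (835337643826864109/3932160000)*x^3*(t0:ℂ)*(t1:ℂ) + (-57515338558020900937/1258291200000)*x^3*(t0:ℂ) + (100658768165730997693/2516582400000)*x^3*(t1:ℂ) + (-152725923268986074514631/16106127360000000)*x^3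 + (-2097152/3)*x^2*(t0:ℂ)^7*(t1:ℂ) + (133013504/15)*x^2*(t0:ℂ)^7 + (524288/3)*x^2*(t0:ℂ)^6*(t1:ℂ)^2 + (208543744/15)*x^2*(t0:ℂ)^6*(t1:ℂ) + (-483923072/25)*x^2*(t0:ℂ)^6 + (-14555648/3)*x^2*(t0:ℂ)^5*(t1:ℂ)^2 + (-208914848/3)*x^2*(t0:ℂ)^5*(t1:ℂ) + (61657463873/500)*x^2*(t0:ℂ)^5 + (1602095284/75)*x^2*(t0:ℂ)^4*(t1:ℂ)^2 + (602703203717/1500)*x^2*(t0:ℂ)^4*(t1:ℂ) + (1371318343287/4000)*x^2*(t0:ℂ)^4 + (-7395307143521/48000)*x^2*(t0:ℂ)^3*(t1:ℂ)^2 + (479486725655783/3840000)*x^2*(t0:ℂ)^3*(t1:ℂ) + (61314853788686721/819200000)*x^2*(t0:ℂ)^3 + (1267993060853843/15360000)*x^2*(t0:ℂ)^2*(t1:ℂ)^2 + (-232645225672310789/1228800000)*x^2*(t0:ℂ)^2*(t1:ℂ) + (-22271308281132820329/524288000000)*x^2*(t0:ℂ)^2 + (2549718756350992327/78643200000)*x^2*(t0:ℂ)*(t1:ℂ)^2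 + (-132109664839286155707/2097152000000)*x^2*(t0:ℂ)*(t1:ℂ) + (60912040738726563303823/4026531840000000)*x^2*(t0:ℂ) + (300262517125672993079/50331648000000)*x^2*(t1:ℂ)^2 + (-338284155272156932597231/32212254720000000)*x^2*(t1:ℂ) + (8698263191976688624229791/3435973836800000000)*x^2 + (-786432/5)*x*(t0:ℂ)^8 + (1376256/5)*x*(t0:ℂ)^7*(t1:ℂ) + (-5219072/25)*x*(t0:ℂ)^7 + (-524288/3)*x*(t0:ℂ)^6*(t1:ℂ)^3 + (6330368/3)*x*(t0:ℂ)^6*(t1:ℂ)^2 + (754918784/75)*x*(t0:ℂ)^6*(t1:ℂ) + (-613680403/125)*x*(t0:ℂ)^6 + (-521728/3)*x*(t0:ℂ)^5*(t1:ℂ)^3 + (649777096/75)*x*(t0:ℂ)^5*(t1:ℂ)^2 + (189328021783/4500)*x*(t0:ℂ)^5*(t1:ℂ) + (-702165722117/19200)*x*(t0:ℂ)^5 + (-781510676/75)*x*(t0:ℂ)^4*(t1:ℂ)^3 + (3545715910777/36000)*x*(t0:ℂ)^4*(t1:ℂ)^2 + (-112200496253501/720000)*x*(t0:ℂ)^4*(t1:ℂ)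 + (-91503990172596623/614400000)*x*(t0:ℂ)^4 + (3795521494169/48000)*x*(t0:ℂ)^3*(t1:ℂ)^3 + (656270433919747/15360000)*x*(t0:ℂ)^3*(t1:ℂ)^2 + (101252355303369851/1474560000)*x*(t0:ℂ)^3*(t1:ℂ) + (16457048856190766449/786432000000)*x*(t0:ℂ)^3 + (-201864195810427/15360000)*x*(t0:ℂ)^2*(t1:ℂ)^3 + (-975959726351209289/58982400000)*x*(t0:ℂ)^2*(t1:ℂ)^2 + (94439733925091499517/4718592000000)*x*(t0:ℂ)^2*(t1:ℂ) + (-4633386809639226392993/1006632960000000)*x*(t0:ℂ)^2 + (-184740542122554703/78643200000)*x*(t0:ℂ)*(t1:ℂ)^3 + (-13927658934653238349/8388608000000)*x*(t0:ℂ)*(t1:ℂ)^2 + (105079556568058809431443/12079595520000000)*x*(t0:ℂ)*(t1:ℂ) + (-2732277374095311021507053/1288490188800000000)*x*(t0:ℂ) + (-12357004097632333077/16777216000000)*x*(t1:ℂ)^3 + (-2083537610020903224647/3865470566400000)*x*(t1:ℂ)^2 + (21069927733112606148800489/15461882265600000000)*x*(t1:ℂ) + (-4881823150467461257658227/20615843020800000000)*x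 + (-3874816/15)*(t0:ℂ)^8 + (458752/15)*(t0:ℂ)^7*(t1:ℂ)^2 + (-188416/3)*(t0:ℂ)^7*(t1:ℂ) + (-301238576/75)*(t0:ℂ)^7 + (-475136/5)*(t0:ℂ)^6*(t1:ℂ)^3 + (53046592/75)*(t0:ℂ)^6*(t1:ℂ)^2 + (-154615724/75)*(t0:ℂ)^6*(t1:ℂ) + (-120009672349/6000)*(t0:ℂ)^6 + (-127504)*(t0:ℂ)^5*(t1:ℂ)^3 + (8049388801/4500)*(t0:ℂ)^5*(t1:ℂ)^2 + (-109860094081/12000)*(t0:ℂ)^5*(t1:ℂ) + (47620987776739/1536000)*(t0:ℂ)^5 + (-40417786079/9000)*(t0:ℂ)^4*(t1:ℂ)^3 + (-16803167898023/1152000)*(t0:ℂ)^4*(t1:ℂ)^2 + (-136171017795117/10240000)*(t0:ℂ)^4*(t1:ℂ) + (16326654737933237/9830400000)*(t0:ℂ)^4 + (49793001285193/7680000)*(t0:ℂ)^3*(t1:ℂ)^3 + (40418071967404567/7372800000)*(t0:ℂ)^3*(t1:ℂ)^2 + (-49425935155676969/9830400000)*(t0:ℂ)^3*(t1:ℂ)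 + (22848476509940933909/12582912000000)*(t0:ℂ)^3 + (16694700160616543/7372800000)*(t0:ℂ)^2*(t1:ℂ)^3 + (3450463849279828799/9437184000000)*(t0:ℂ)^2*(t1:ℂ)^2 + (-38934248098756759253/16777216000000)*(t0:ℂ)^2*(t1:ℂ) + (4279666555587099456649/5368709120000000)*(t0:ℂ)^2 + (11425943869322154209/12582912000000)*(t0:ℂ)*(t1:ℂ)^3 + (3680445323495358728137/12079595520000000)*(t0:ℂ)*(t1:ℂ)^2 + (-1073985061013524747621/2147483648000000)*(t0:ℂ)*(t1:ℂ) + (1559286734726737907738647/20615843020800000000)*(t0:ℂ) + (3503118228079372916179/24159191040000000)*(t1:ℂ)^3 + (652786850010983698502957/15461882265600000000)*(t1:ℂ)^2 + (-436319785904488378185761/10307921510400000000)*(t1:ℂ) + (156070327658138544891441/27487790694400000000))*hdp' + ((844485626287513127709/2147483648000000)*x^3*(t1:ℂ) + (-296129737349906777733717/3435973836800000000)*x^3 + (524288/15)*x^2*(t0:ℂ)^8 + (4161536/15)*x^2*(t0:ℂ)^7*(t1:ℂ) + (-176531072/75)*x^2*(t0:ℂ)^7 + (-1819648/15)*x^2*(t0:ℂ)^6*(t1:ℂ)^2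 + (-44339904/25)*x^2*(t0:ℂ)^6*(t1:ℂ) + (1435969049/750)*x^2*(t0:ℂ)^6 + (942336)*x^2*(t0:ℂ)^5*(t1:ℂ)^3 + (-253717156/75)*x^2*(t0:ℂ)^5*(t1:ℂ)^2 + (100218056537/9000)*x^2*(t0:ℂ)^5*(t1:ℂ) + (-2714465242943/192000)*x^2*(t0:ℂ)^5 + (-51286538/25)*x^2*(t0:ℂ)^4*(t1:ℂ)^3 + (-1436316709021/72000)*x^2*(t0:ℂ)^4*(t1:ℂ)^2 + (-17638575657407/720000)*x^2*(t0:ℂ)^4*(t1:ℂ) + (17386646374363423/1228800000)*x^2*(t0:ℂ)^4 + (449973206169/32000)*x^2*(t0:ℂ)^3*(t1:ℂ)^3 + (262963793710711/10240000)*x^2*(t0:ℂ)^3*(t1:ℂ)^2 + (-8748494892160091/2949120000)*x^2*(t0:ℂ)^3*(t1:ℂ) + (1222758099368454071/1572864000000)*x^2*(t0:ℂ)^3 + (-133266108130427/10240000)*x^2*(t0:ℂ)^2*(t1:ℂ)^3 + (-806709382313098699/117964800000)*x^2*(t0:ℂ)^2*(t1:ℂ)^2 + (-8917251925995852937/9437184000000)*x^2*(t0:ℂ)^2*(t1:ℂ)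 + (336922236566354417611/671088640000000)*x^2*(t0:ℂ)^2 + (-295622276778554703/52428800000)*x^2*(t0:ℂ)*(t1:ℂ)^3 + (-2936952297308416549/10066329600000)*x^2*(t0:ℂ)*(t1:ℂ)^2 + (-7447011009456137657923/24159191040000000)*x^2*(t0:ℂ)*(t1:ℂ) + (21178820085456559981191/858993459200000000)*x^2*(t0:ℂ) + (-32898938104096999231/33554432000000)*x^2*(t1:ℂ)^3 + (-2462255988390120918373/193273528320000000)*x^2*(t1:ℂ)^2 + (-7010006682584995484978729/30923764531200000000)*x^2*(t1:ℂ) + (2027147312288110237158547/41231686041600000000)*x^2 + (663552/5)*x*(t0:ℂ)^8 + (65536/5)*x*(t0:ℂ)^7*(t1:ℂ)^2 + (-2184192/5)*x*(t0:ℂ)^7*(t1:ℂ) + (53901232/25)*x*(t0:ℂ)^7 + (475136/5)*x*(t0:ℂ)^6*(t1:ℂ)^3 + (-28374464/25)*x*(t0:ℂ)^6*(t1:ℂ)^2 + (47695876/25)*x*(t0:ℂ)^6*(t1:ℂ) + (20822597723/2000)*x*(t0:ℂ)^6 + (127504)*x*(t0:ℂ)^5*(t1:ℂ)^3 + (8289059759/4500)*x*(t0:ℂ)^5*(t1:ℂ)^2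 + (-24650017463/3000)*x*(t0:ℂ)^5*(t1:ℂ) + (-7211983765951/512000)*x*(t0:ℂ)^5 + (40417786079/9000)*x*(t0:ℂ)^4*(t1:ℂ)^3 + (-14069478778033/1152000)*x*(t0:ℂ)^4*(t1:ℂ)^2 + (303385079380531/30720000)*x*(t0:ℂ)^4*(t1:ℂ) + (2858830924100321/3276800000)*x*(t0:ℂ)^4 + (-49793001285193/7680000)*x*(t0:ℂ)^3*(t1:ℂ)^3 + (31781430456800393/7372800000)*x*(t0:ℂ)^3*(t1:ℂ)^2 + (103008624518303017/19660800000)*x*(t0:ℂ)^3*(t1:ℂ) + (-5423089144411637933/4194304000000)*x*(t0:ℂ)^3 + (-16694700160616543/7372800000)*x*(t0:ℂ)^2*(t1:ℂ)^3 + (28697757324466735561/9437184000000)*x*(t0:ℂ)^2*(t1:ℂ)^2 + (3288745749306983843/10066329600000)*x*(t0:ℂ)^2*(t1:ℂ) + (-1407245869107956653909/5368709120000000)*x*(t0:ℂ)^2 + (-11425943869322154209/12582912000000)*x*(t0:ℂ)*(t1:ℂ)^3 + (4465624272815921087303/12079595520000000)*x*(t0:ℂ)*(t1:ℂ)^2 +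 (2181764037911518355657/16106127360000000)*x*(t0:ℂ)*(t1:ℂ) + (-202576040666762522524029/6871947673600000000)*x*(t0:ℂ) + (-3503118228079372916179/24159191040000000)*x*(t1:ℂ)^3 + (-652786850010983698502957/15461882265600000000)*x*(t1:ℂ)^2 + (436319785904488378185761/10307921510400000000)*x*(t1:ℂ) + (-156070327658138544891441/27487790694400000000)*x + (-16384/5)*(t0:ℂ)^8*(t1:ℂ) + (289216/5)*(t0:ℂ)^8 + (-118784/5)*(t0:ℂ)^7*(t1:ℂ)^2 + (6066656/25)*(t0:ℂ)^7*(t1:ℂ) + (-42306531/100)*(t0:ℂ)^7 + (-31876)*(t0:ℂ)^6*(t1:ℂ)^2 + (-5550839549/18000)*(t0:ℂ)^6*(t1:ℂ) + (34668314441/128000)*(t0:ℂ)^6 + (-40417786079/36000)*(t0:ℂ)^5*(t1:ℂ)^2 + (868739211631/288000)*(t0:ℂ)^5*(t1:ℂ) + (117575526452447/32768000)*(t0:ℂ)^5 + (49793001285193/30720000)*(t0:ℂ)^4*(t1:ℂ)^2 + (-43644491918662493/29491200000)*(t0:ℂ)^4*(t1:ℂ) + (-170782726213334653/209715200000)*(t0:ℂ)^4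 + (16694700160616543/29491200000)*(t0:ℂ)^3*(t1:ℂ)^2 + (-15710833511811827603/18874368000000)*(t0:ℂ)^3*(t1:ℂ) + (75086412829642407109/268435456000000)*(t0:ℂ)^3 + (11425943869322154209/50331648000000)*(t0:ℂ)^2*(t1:ℂ)^2 + (-9731399429359142186993/48318382080000000)*(t0:ℂ)^2*(t1:ℂ) + (14342534554805688203017/343597383680000000)*(t0:ℂ)^2 + (3503118228079372916179/96636764160000000)*(t0:ℂ)*(t1:ℂ)^2 + (-1028709899467115301262963/61847529062400000000)*(t0:ℂ)*(t1:ℂ) + (52023442552712848297147/27487790694400000000)*(t0:ℂ))*hddp'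
  have hg1R : t0^2*(t0+10)^2*(8*t0+7)^3*(8*t0-1)^3 = 0 := by exact_mod_cast hg1
  have h8 : t0 = 1/8 := by
    have hpos : 0 < t0^2*(t0+10)^2*(8*t0+7)^3 := by positivity
    have h3 : (8*t0-1)^3 = 0 := by
      rcases mul_eq_zero.mp
        (by linear_combination hg1R :
          (t0^2*(t0+10)^2*(8*t0+7)^3) * (8*t0-1)^3 = 0) with h | h
      · exact absurd h hpos.ne'
      · exact h
    linarith [pow_eq_zero_iff (n := 3) (by norm_num) |>.mp h3]
  rw [h8] at hp hdp' hddp'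
  push_cast at hp hdp' hddp'
  -- Certificate 2: with t0 = 1/8, eliminate x, get univariate condition on t1
  have hg2 : ((t1^2*(17784656*t1^2 + 10779510*t1 - 14285403) : ℝ) : ℂ) = 0 := by
    push_cast
    linear_combination ((151631700)*x*(t1:ℂ) + (94052970)*x + (-454895100)*(t1:ℂ)^2 + (-407705385/4)*(t1:ℂ) + (-302421429/8))*hp + ((-30326340)*x^2*(t1:ℂ) + (-18810594)*x^2 + (272937060)*x*(t1:ℂ)^2 + (575676531/8)*x*(t1:ℂ) + (292725747/16)*x + (-51049339/8)*(t1:ℂ)^2 + (-237912621/32)*(t1:ℂ) + (-217483371/64))*hdp' + ((-45489510)*x^2*(t1:ℂ)^2 + (-182794275/16)*x^2*(t1:ℂ) + (-56722167/32)*x^2 + (51049339/8)*x*(t1:ℂ)^2 + (109308549/32)*x*(t1:ℂ) + (56722167/64)*x + (1111541/2)*(t1:ℂ)^2 + (-35951883/256)*(t1:ℂ) + (-56722167/512))*hddp'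
  have hg2R : t1^2*(17784656*t1^2 + 10779510*t1 - 14285403) = 0 := by exact_mod_cast hg2
  have hq : 17784656*t1^2 + 10779510*t1 - 14285403 = 0 := by
    rcases mul_eq_zero.mp hg2R with h | h
    · exact absurd h (pow_ne_zero 2 ht1.ne')
    · exact h
  nlinarith [mul_pos ht1 ht1, mul_lt_mul_of_pos_left ht1' ht1]
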